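/- For all y, ȳ ∈ ℝ one has ‖w_h(y) − w_h(ȳ)‖_V ≤ (1/2) e^{−y/2} |e^{y−ȳ} − 1| ‖f‖_H. -/

import Mathlib

open RealInnerProductSpace

private lemma aux_real (y ybar ne nιe t nf : ℝ) (ht0 : 0 ≤ t)
    (ht : t ≤ Real.exp (-ybar) * nf)
    (hne : 0 ≤ ne) (hnf : 0 ≤ nf) (hιe : 0 ≤ nιe)
    (hb : ne^2 + Real.exp y * nιe^2 ≤ |Real.exp ybar - Real.exp y| * (t * nιe)) :
    ne ≤ 1/2 * Real.exp (-y/2) * |Real.exp (y - ybar) - 1| * nf := by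
  set c := Real.exp ybar - Real.exp y with hc
  have h4 : 4 * Real.exp y * ne^2 ≤ |c|^2 * t^2 := by
    nlinarith [sq_nonneg (2 * Real.exp y * nιe - |c| * t), Real.exp_pos y,
      abs_nonneg c, sq_nonneg nιe]
  have ht2 : t^2 ≤ (Real.exp (-ybar) * nf)^2 := by nlinarith [Real.exp_pos (-ybar)]
  have h5 : 4 * Real.exp y * ne^2 ≤ (|c| * Real.exp (-ybar))^2 * nf^2 := by
    have := mul_le_mul_of_nonneg_left ht2 (sq_nonneg (|c|))
    nlinarith
  have hA : |c| * Real.exp (-ybar) = |Real.exp (y - ybar) - 1| := by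
    have hne0 : Real.exp ybar ≠ 0 := (Real.exp_pos ybar).ne'
    have hid : Real.exp (y - ybar) - 1 = -(c * Real.exp (-ybar)) := by
      rw [Real.exp_sub, Real.exp_neg, hc]
      field_simp
      ring
    rw [hid, abs_neg, abs_mul, abs_of_pos (Real.exp_pos _)]
  rw [← hA]
  have hB0 : (0:ℝ) ≤ 1 / 2 * Real.exp (-y / 2) * (|c| * Real.exp (-ybar)) * nf := by
    positivity
  have hE2 : Real.exp (-y / 2) * Real.exp (-y / 2) * Real.exp y = 1 := by
    rw [← Real.exp_add, ← Real.exp_add]; norm_num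
  have hsq : ne^2 ≤ (1 / 2 * Real.exp (-y / 2) * (|c| * Real.exp (-ybar)) * nf)^2 := by
    have hEp : (0:ℝ) < Real.exp (-y / 2) := Real.exp_pos _
    have h6 := mul_le_mul_of_nonneg_left h5
      (by positivity : (0:ℝ) ≤ Real.exp (-y/2) * Real.exp (-y/2) / 4)
    nlinarith [h6, hE2]
  nlinarith [hsq, hB0, hne]

theorem stmt_4
    {V H : Type*} [NormedAddCommGroup V] [InnerProductSpace ℝ V] [CompleteSpace V]
    [NormedAddCommGroup H] [InnerProductSpace ℝ H] [CompleteSpace H]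
    (CP : ℝ) (hCP : 0 < CP)
    (ι : V →L[ℝ] H) (hι : ∀ v : V, ‖ι v‖ ≤ CP * ‖v‖)
    (f : H)
    (F : V → ℝ) (hF : ∀ v, F v = ⟪f, ι v⟫)
    (a : ℝ → V → V → ℝ)
    (ha : ∀ y w v, a y w v = ⟪w, v⟫ + Real.exp y * ⟪ι w, ι v⟫)
    (Vh : Submodule ℝ V) (hVh : IsClosed (Vh : Set V))
    (wh : ℝ → V) (hwh_mem : ∀ y, wh y ∈ Vh)
    (hwh : ∀ y, ∀ v ∈ Vh, a y (wh y) v = F v)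
    (y ybar : ℝ) :
    ‖wh y - wh ybar‖ ≤ (1 / 2) * Real.exp (-y / 2) * |Real.exp (y - ybar) - 1| * ‖f‖ := by
  have ht0 : (0:ℝ) ≤ ‖ι (wh ybar)‖ := norm_nonneg _
  -- bound on ‖ι (wh ybar)‖
  have hbar := hwh ybar (wh ybar) (hwh_mem ybar)
  rw [ha, hF, real_inner_self_eq_norm_sq, real_inner_self_eq_norm_sq] at hbar
  have hcs : ⟪f, ι (wh ybar)⟫ ≤ ‖f‖ * ‖ι (wh ybar)‖ := real_inner_le_norm _ _
  have htb : Real.exp ybar * ‖ι (wh ybar)‖^2 ≤ ‖f‖ * ‖ι (wh ybar)‖ := by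
    nlinarith [sq_nonneg ‖wh ybar‖]
  have ht : ‖ι (wh ybar)‖ ≤ Real.exp (-ybar) * ‖f‖ := by
    rcases eq_or_lt_of_le ht0 with h0 | h0
    · rw [← h0]; positivity
    · have hE : Real.exp (-ybar) * Real.exp ybar = 1 := by
        rw [← Real.exp_add]; simp
      nlinarith [Real.exp_pos (-ybar),
        mul_le_mul_of_nonneg_left htb (Real.exp_pos (-ybar)).le]
  -- key identity with test function e := wh y - wh ybar
  have hmem : wh y - wh ybar ∈ Vh := Submodule.sub_mem _ (hwh_mem y) (hwh_mem ybar)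
  have heq : a y (wh y) (wh y - wh ybar) = a ybar (wh ybar) (wh y - wh ybar) := by
    rw [hwh y _ hmem, hwh ybar _ hmem]
  rw [ha, ha] at heq
  have e1 : ⟪wh y - wh ybar, wh y - wh ybar⟫ = ‖wh y - wh ybar‖^2 :=
    real_inner_self_eq_norm_sq _
  have e2 : ⟪ι (wh y - wh ybar), ι (wh y - wh ybar)⟫ = ‖ι (wh y - wh ybar)‖^2 :=
    real_inner_self_eq_norm_sq _
  have e3 : ⟪wh y - wh ybar, wh y - wh ybar⟫
      = ⟪wh y, wh y - wh ybar⟫ - ⟪wh ybar, wh y - wh ybar⟫ := by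
    rw [inner_sub_left]
  have e4 : ⟪ι (wh y - wh ybar), ι (wh y - wh ybar)⟫
      = ⟪ι (wh y), ι (wh y - wh ybar)⟫ - ⟪ι (wh ybar), ι (wh y - wh ybar)⟫ := by
    rw [map_sub, inner_sub_left]
  have hkey : ‖wh y - wh ybar‖^2 + Real.exp y * ‖ι (wh y - wh ybar)‖^2
      = (Real.exp ybar - Real.exp y) * ⟪ι (wh ybar), ι (wh y - wh ybar)⟫ := by
    linear_combination (e3 - e1) + Real.exp y * (e4 - e2) + heq
  have hb : ‖wh y - wh ybar‖^2 + Real.exp y * ‖ι (wh y - wh ybar)‖^2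
      ≤ |Real.exp ybar - Real.exp y| * (‖ι (wh ybar)‖ * ‖ι (wh y - wh ybar)‖) := by
    rw [hkey]
    calc (Real.exp ybar - Real.exp y) * ⟪ι (wh ybar), ι (wh y - wh ybar)⟫
        ≤ |(Real.exp ybar - Real.exp y) * ⟪ι (wh ybar), ι (wh y - wh ybar)⟫| :=
          le_abs_self _
      _ = |Real.exp ybar - Real.exp y| * |⟪ι (wh ybar), ι (wh y - wh ybar)⟫| :=
          abs_mul _ _
      _ ≤ |Real.exp ybar - Real.exp y| * (‖ι (wh ybar)‖ * ‖ι (wh y - wh ybar)‖) :=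
          mul_le_mul_of_nonneg_left (abs_real_inner_le_norm _ _) (abs_nonneg _)
  exact aux_real y ybar _ _ _ _ ht0 ht (norm_nonneg _) (norm_nonneg _)
    (norm_nonneg _) hb
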